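/- Let Q be the poset obtained from the lattice P of Example (countably many copies of negative integers glued at top -1 and bottom -∞) by removing the bottom element -∞. Then Q, equipped with the upper topology, is a sober space in which every compact saturated subset has empty interior; in particular Q is not locally compact. -/

import Mathlib

open Set

section RelDefs
variable {α : Type*} (r : α → α → Prop)

/-- `D` is a (nonempty) directed subset with respect to the relation `r`. -/
def DirOn (D : Set α) : Prop :=
  D.Nonempty ∧ ∀ a ∈ D, ∀ b ∈ D, ∃ c ∈ D, r a c ∧ r b c

/-- `s` is a least upper bound of `D` with respect to `r`. -/
def IsLubR (D : Set α) (s : α) : Prop :=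
  (∀ d ∈ D, r d s) ∧ ∀ u, (∀ d ∈ D, r d u) → r s u

/-- `x` is way-below `y` with respect to `r`. -/
def WB (x y : α) : Prop :=
  ∀ D : Set α, DirOn r D → ∀ s, IsLubR r D s → r y s → ∃ d ∈ D, r x d

/-- Every directed subset has a least upper bound (dcpo property). -/
def DcpoRel : Prop := ∀ D : Set α, DirOn r D → ∃ s, IsLubR r D s

/-- Continuity: every element is the directed least upper bound of the elements way-below it. -/
def ContinuousRel : Prop :=
  ∀ y, DirOn r {x | WB r x y} ∧ IsLubR r {x | WB r x y} y

/-- Algebraicity: every element is the directed least upper bound of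
the compact elements (`WB r x x`) below it. -/
def AlgebraicRel : Prop :=
  ∀ y, DirOn r {x | WB r x x ∧ r x y} ∧ IsLubR r {x | WB r x x ∧ r x y} y

/-- Upper set generated by `F` with respect to `r`. -/
def UpS (F : Set α) : Set α := {x | ∃ f ∈ F, r f x}

/-- The set `F` is way-below the set `G` with respect to `r`. -/
def SetWB (F G : Set α) : Prop :=
  ∀ D : Set α, DirOn r D → ∀ s, IsLubR r D s → s ∈ UpS r G → ∃ d ∈ D, d ∈ UpS r F

/-- Finite sets way-below `x`. -/
def FinFam (x : α) : Set (Finset α) := {F | SetWB r (F : Set α) {x}}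

/-- Finite sets `F` with `F ≪ F ≪ x`. -/
def FinFamC (x : α) : Set (Finset α) :=
  {F | SetWB r (F : Set α) (F : Set α) ∧ SetWB r (F : Set α) {x}}

/-- Directedness of a family of finite sets in the Smyth preorder
(`F ⊑ G` iff `G ⊆ ↑F`). -/
def SmythDirected (S : Set (Finset α)) : Prop :=
  S.Nonempty ∧ ∀ F ∈ S, ∀ G ∈ S, ∃ H ∈ S,
    (H : Set α) ⊆ UpS r (F : Set α) ∧ (H : Set α) ⊆ UpS r (G : Set α)

/-- Quasicontinuity with respect to `r`. -/
def QuasicontinuousRel : Prop :=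
  ∀ x, SmythDirected r (FinFam r x) ∧
    UpS r {x} = ⋂ F ∈ FinFam r x, UpS r (F : Set α)

/-- Quasialgebraicity with respect to `r`. -/
def QuasialgebraicRel : Prop :=
  ∀ x, SmythDirected r (FinFamC r x) ∧
    UpS r {x} = ⋂ F ∈ FinFamC r x, UpS r (F : Set α)

/-- `U` is Scott open with respect to `r`: an upper set inaccessible by
least upper bounds of directed sets. -/
def IsScottOpenRel (U : Set α) : Prop :=
  (∀ x ∈ U, ∀ y, r x y → y ∈ U) ∧
    ∀ D : Set α, DirOn r D → ∀ s, IsLubR r D s → s ∈ U → ∃ d ∈ D, d ∈ U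

end RelDefs

section Spec
variable {X : Type*} [TopologicalSpace X]

/-- The specialization order: `x ≤ y` iff `x ∈ cl {y}`. -/
def sle (x y : X) : Prop := x ∈ closure ({y} : Set X)

/-- The maximal elements of `C` with respect to the specialization order. -/
def maxSpec (C : Set X) : Set X := {c | c ∈ C ∧ ∀ y ∈ C, sle c y → sle y c}

end Spec

/-- One "column": `(i, n)` represents the element `-(n+2)` of the `i`-th copy of
the negative integers (without the glued top `-1` and bottom `-∞`). -/
def NegCol : Type := ℕ × ℕ

/-- `(i, m) ≤ (j, n)` iff they lie in the same column (`i = j`) and `-(m+2) ≤ -(n+2)`,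
i.e. `n ≤ m`. -/
instance : PartialOrder NegCol where
  le a b := a.1 = b.1 ∧ b.2 ≤ a.2
  le_refl a := ⟨rfl, le_rfl⟩
  le_trans a b c hab hbc := ⟨hab.1.trans hbc.1, hbc.2.trans hab.2⟩
  le_antisymm a b hab hba := Prod.ext hab.1 (le_antisymm hba.2 hab.2)

/-- The lattice `P`: countably many copies of the negative integers glued
at the top `-1` (`⊤`) and the bottom `-∞` (`⊥`). -/
def PGlued : Type := WithBot (WithTop NegCol)

instance : PartialOrder PGlued := by unfold PGlued; infer_instance

/-- The upper topology on `PGlued`: subbasic closed sets are the sets `↓F`, `F` finite. -/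
instance : TopologicalSpace PGlued :=
  TopologicalSpace.generateFrom
    {s : Set PGlued | ∃ F : Finset PGlued, s = {x | ∃ f ∈ F, x ≤ f}ᶜ}

/-- The poset `Q`: `P` with the bottom element `-∞` removed. -/
def QGlued : Type := WithTop NegCol

instance : PartialOrder QGlued := by unfold QGlued; infer_instance

/-- The upper topology on `QGlued`. -/
instance : TopologicalSpace QGlued :=
  TopologicalSpace.generateFrom
    {s : Set QGlued | ∃ F : Finset QGlued, s = {x | ∃ f ∈ F, x ≤ f}ᶜ}

namespace Stmt13Aux

noncomputable instance : DecidableEq QGlued := Classical.decEq _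

def qtop : QGlued := (⊤ : WithTop NegCol)
def qc (p : NegCol) : QGlued := (p : WithTop NegCol)

lemma q_le_top (x : QGlued) : x ≤ qtop := @le_top (WithTop NegCol) _ _ x

lemma top_not_le (p : NegCol) : ¬ qtop ≤ qc p := fun h =>
  WithTop.coe_ne_top (top_le_iff.1 (show (⊤ : WithTop NegCol) ≤ (p : WithTop NegCol) from h))

lemma qc_le_qc {p q : NegCol} : qc p ≤ qc q ↔ p ≤ q := WithTop.coe_le_coe

lemma negcol_le {a b : NegCol} : a ≤ b ↔ a.1 = b.1 ∧ b.2 ≤ a.2 := Iff.rfl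

def qn (i m : ℕ) : NegCol := (i, m)

lemma qn_le {i m j n : ℕ} : qn i m ≤ qn j n ↔ i = j ∧ n ≤ m := Iff.rfl

lemma le_qn {q : NegCol} {i n : ℕ} (h : q ≤ qn i n) : q = qn i q.2 ∧ n ≤ q.2 := by
  obtain ⟨h1, h2⟩ := negcol_le.1 h
  exact ⟨(Prod.ext h1 rfl : q = (i, q.2)), h2⟩

lemma q_cases' : ∀ x : Option NegCol,
    (show QGlued from x) = qtop ∨ ∃ p : NegCol, (show QGlued from x) = qc p
  | none => Or.inl rfl
  | some p => Or.inr ⟨p, rfl⟩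

lemma q_cases (x : QGlued) : x = qtop ∨ ∃ p : NegCol, x = qc p := q_cases' x

lemma le_qc {y : QGlued} {p : NegCol} (h : y ≤ qc p) : ∃ q, y = qc q ∧ q ≤ p := by
  rcases q_cases y with rfl | ⟨q, rfl⟩
  · exact absurd h (top_not_le p)
  · exact ⟨q, rfl, qc_le_qc.1 h⟩

def DSet (F : Finset QGlued) : Set QGlued := {x | ∃ f ∈ F, x ≤ f}

lemma isOpen_compl_DSet (F : Finset QGlued) : IsOpen (DSet F)ᶜ :=
  TopologicalSpace.GenerateOpen.basic _ ⟨F, rfl⟩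

lemma isUpperSet_of_isOpen {U : Set QGlued} (h : IsOpen U) :
    ∀ x ∈ U, ∀ y, x ≤ y → y ∈ U := by
  have h' : TopologicalSpace.GenerateOpen
      {s : Set QGlued | ∃ F : Finset QGlued, s = {x | ∃ f ∈ F, x ≤ f}ᶜ} U := h
  clear h
  induction h' with
  | basic s hs =>
      obtain ⟨F, rfl⟩ := hs
      rintro x hx y hxy ⟨f, hf, hyf⟩
      exact hx ⟨f, hf, hxy.trans hyf⟩
  | univ => exact fun x _ y _ => mem_univ y
  | inter s t _ _ ihs iht =>
      exact fun x hx y hxy => ⟨ihs x hx.1 y hxy, iht x hx.2 y hxy⟩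
  | sUnion S _ ih =>
      rintro x ⟨s, hsS, hxs⟩ y hxy
      exact ⟨s, hsS, ih s hsS x hxs y hxy⟩

lemma exists_basic {U : Set QGlued} (h : IsOpen U) :
    ∀ x ∈ U, ∃ F : Finset QGlued, x ∉ DSet F ∧ (DSet F)ᶜ ⊆ U := by
  have h' : TopologicalSpace.GenerateOpen
      {s : Set QGlued | ∃ F : Finset QGlued, s = {x | ∃ f ∈ F, x ≤ f}ᶜ} U := h
  clear h
  induction h' with
  | basic s hs =>
      obtain ⟨F, rfl⟩ := hs
      exact fun x hx => ⟨F, hx, subset_rfl⟩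
  | univ =>
      refine fun x _ => ⟨∅, ?_, fun y _ => mem_univ y⟩
      rintro ⟨f, hf, -⟩; exact absurd hf (Finset.notMem_empty f)
  | inter s t _ _ ihs iht =>
      intro x hx
      obtain ⟨F, hF, hFs⟩ := ihs x hx.1
      obtain ⟨G, hG, hGt⟩ := iht x hx.2
      have hun : DSet (F ∪ G) = DSet F ∪ DSet G := by
        ext z; simp [DSet, Finset.mem_union, or_and_right, exists_or]
      refine ⟨F ∪ G, by rw [hun]; exact fun h => h.elim hF hG, ?_⟩
      rw [hun, compl_union]
      exact fun z hz => ⟨hFs hz.1, hGt hz.2⟩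
  | sUnion S _ ih =>
      rintro x ⟨s, hsS, hxs⟩
      obtain ⟨F, h1, h2⟩ := ih s hsS x hxs
      exact ⟨F, h1, h2.trans (subset_sUnion_of_mem hsS)⟩

lemma DSet_singleton (a : QGlued) : DSet {a} = {x | x ≤ a} := by
  ext x; simp [DSet]

lemma isClosed_le (a : QGlued) : IsClosed {x : QGlued | x ≤ a} := by
  rw [← isOpen_compl_iff, ← DSet_singleton]
  exact isOpen_compl_DSet {a}

lemma closure_singleton (a : QGlued) : closure {a} = {x | x ≤ a} := by
  apply subset_antisymm
  · exact closure_minimal (by simp) (isClosed_le a)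
  · intro x hx
    rw [mem_closure_iff]
    intro o ho hxo
    exact ⟨a, isUpperSet_of_isOpen ho x hxo a hx, rfl⟩

lemma lower_of_isClosed {S : Set QGlued} (h : IsClosed S) {x y : QGlued}
    (hxy : x ≤ y) (hy : y ∈ S) : x ∈ S := by
  by_contra hx
  exact isUpperSet_of_isOpen h.isOpen_compl x hx y hxy hy

def colIdx (f : QGlued) : ℕ := Option.elim (show Option NegCol from f) 0 Prod.fst

lemma interior_compact_empty (K : Set QGlued) (hK : IsCompact K) : interior K = ∅ := by
  by_contra hne
  obtain ⟨x, hx⟩ := nonempty_iff_ne_empty.2 hne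
  obtain ⟨F, hxF, hFK⟩ := exists_basic isOpen_interior x hx
  have hFK' : (DSet F)ᶜ ⊆ K := hFK.trans interior_subset
  set c : ℕ := F.sup colIdx + 1 with hc
  have hcol : ∀ m : ℕ, qc (qn c m) ∈ (DSet F)ᶜ := by
    intro m
    rintro ⟨f, hf, hle⟩
    rcases q_cases f with rfl | ⟨p, rfl⟩
    · exact hxF ⟨qtop, hf, q_le_top x⟩
    · have h1 : qn c m ≤ p := qc_le_qc.1 hle
      have h2 : p.1 ≤ F.sup colIdx := Finset.le_sup (f := colIdx) hf
      have h3 : c = p.1 := (negcol_le.1 h1).1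
      omega
  have hcov : K ⊆ ⋃ m : ℕ, (DSet {qc (qn c m)})ᶜ := by
    intro y _
    rcases q_cases y with rfl | ⟨p, rfl⟩
    · refine mem_iUnion.2 ⟨0, ?_⟩
      rintro ⟨f, hf, hle⟩
      rw [Finset.mem_singleton] at hf; subst hf
      exact top_not_le _ hle
    · refine mem_iUnion.2 ⟨p.2 + 1, ?_⟩
      rintro ⟨f, hf, hle⟩
      rw [Finset.mem_singleton] at hf; subst hf
      have := (negcol_le.1 (qc_le_qc.1 hle)).2
      simp only [qn] at this
      omega
  obtain ⟨T, hT⟩ := hK.elim_finite_subcover (fun m : ℕ => (DSet {qc (qn c m)})ᶜ)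
    (fun m => isOpen_compl_DSet _) hcov
  have hp : qc (qn c (T.sup id)) ∈ K := hFK' (hcol _)
  obtain ⟨m, hmT, hm⟩ := mem_iUnion₂.1 (hT hp)
  exact hm ⟨qc (qn c m), Finset.mem_singleton_self _,
    qc_le_qc.2 (qn_le.2 ⟨rfl, Finset.le_sup (f := id) hmT⟩)⟩

lemma quasiSober : QuasiSober QGlued := by
  constructor
  intro S hirr hcl
  classical
  by_cases htop : qtop ∈ S
  · refine ⟨qtop, ?_⟩
    show closure {qtop} = S
    rw [closure_singleton]
    have huniv : S = univ := by
      by_contra hS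
      obtain ⟨y, hy⟩ := nonempty_compl.2 hS
      obtain ⟨F, hyF, hFS⟩ := exists_basic hcl.isOpen_compl y hy
      have hSF : S ⊆ DSet F := fun z hz => by
        by_contra hz'; exact hFS hz' hz
      obtain ⟨f, hf, hle⟩ := hSF htop
      rcases q_cases f with rfl | ⟨p, rfl⟩
      · exact hyF ⟨qtop, hf, q_le_top y⟩
      · exact top_not_le p hle
    rw [huniv]
    exact eq_univ_of_forall fun z => q_le_top z
  · obtain ⟨F, hyF, hFS⟩ := exists_basic hcl.isOpen_compl qtop htop
    have hSF : S ⊆ DSet F := fun z hz => by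
      by_contra hz'; exact hFS hz' hz
    obtain ⟨z, hzt, hSz⟩ := (isIrreducible_iff_sUnion_isClosed.1 hirr)
      (F.image fun f => {x | x ≤ f})
      (by rintro z hz
          obtain ⟨f, -, rfl⟩ := Finset.mem_image.1 hz
          exact isClosed_le f)
      (by intro y hy
          obtain ⟨f, hf, hle⟩ := hSF hy
          exact ⟨{x | x ≤ f}, Finset.mem_coe.2 (Finset.mem_image_of_mem _ hf), hle⟩)
    obtain ⟨f, hfF, rfl⟩ := Finset.mem_image.1 hzt
    rcases q_cases f with rfl | ⟨fp, rfl⟩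
    · exact absurd ⟨qtop, hfF, le_refl _⟩ hyF
    · obtain ⟨i, n⟩ := fp
      have hA : ∃ m : ℕ, qc (qn i m) ∈ S := by
        obtain ⟨s₀, hs₀⟩ := hirr.1
        obtain ⟨q, rfl, hq⟩ := le_qc (hSz hs₀)
        obtain ⟨hq1, -⟩ := le_qn (q := q) hq
        exact ⟨q.2, by rwa [hq1] at hs₀⟩
      set m₀ := Nat.find hA with hm₀
      refine ⟨qc (qn i m₀), ?_⟩
      show closure {qc (qn i m₀)} = S
      rw [closure_singleton]
      apply subset_antisymm
      · exact fun x hx => lower_of_isClosed hcl hx (Nat.find_spec hA)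
      · intro y hy
        obtain ⟨q, rfl, hq⟩ := le_qc (hSz hy)
        obtain ⟨hq1, -⟩ := le_qn (q := q) hq
        have hqS : qc (qn i q.2) ∈ S := by rwa [hq1] at hy
        have hle : m₀ ≤ q.2 := Nat.find_min' hA hqS
        rw [hq1]
        exact qc_le_qc.2 (qn_le.2 ⟨rfl, hle⟩)

lemma t0 : T0Space QGlued := by
  constructor
  intro x y h
  have h1 : y ∈ closure {x} := h.specializes.mem_closure
  have h2 : x ∈ closure {y} := h.specializes'.mem_closure
  rw [closure_singleton] at h1 h2
  exact le_antisymm h2 h1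

lemma notLC : ¬ LocallyCompactSpace QGlued := by
  intro h
  obtain ⟨s, hs, -, hcomp⟩ := h.local_compact_nhds qtop univ Filter.univ_mem
  have : qtop ∈ interior s := mem_interior_iff_mem_nhds.2 hs
  rw [interior_compact_empty s hcomp] at this
  exact this

end Stmt13Aux

/-- `Q` with the upper topology is sober, every compact saturated
subset of `Q` has empty interior, and `Q` is not locally compact. -/
theorem stmt13 :
    T0Space QGlued ∧ QuasiSober QGlued ∧
      (∀ K : Set QGlued, IsCompact K → K = ⋂₀ {U | IsOpen U ∧ K ⊆ U} →
        interior K = ∅) ∧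
      ¬ LocallyCompactSpace QGlued := by
  exact ⟨Stmt13Aux.t0, Stmt13Aux.quasiSober,
    fun K hK _ => Stmt13Aux.interior_compact_empty K hK, Stmt13Aux.notLC⟩
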